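/- arXiv:2507.12729 — 2 statements merged into one kernel-verified Lean document; each statement's English description precedes it below -/
import Mathlib

section
/- Fix n₃ ≥ 1 and an invertible matrix M ∈ ℝ^{n₃×n₃}. For every tensor A of size n₁ × n₂ × n₃ over ℝ there exist tensors U of size n₁ × n₁ × n₃, V of size n₂ × n₂ × n₃, and S of size n₁ × n₂ × n₃ such that U and V are ⋆_M-orthogonal (Uᵀ ⋆_M U = U ⋆_M Uᵀ = ℐ_M and Vᵀ ⋆_M V = V ⋆_M Vᵀ = ℐ_M), S is f-diagonal (S_{i,j} = 0 whenever i ≠ j), and A = U ⋆_M S ⋆_M Vᵀ. -/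
open Matrix BigOperators Kronecker

noncomputable section

/-- The tubal `⋆_M`-product of tubes `a, b : Fin n₃ → R`:
`a ⋆_M b = M⁻¹ *ᵥ ((M *ᵥ a) ⊙ (M *ᵥ b))`, where `⊙` is the entrywise product. -/
def tubMul {n₃ : ℕ} {R : Type} [CommRing R] (M : Matrix (Fin n₃) (Fin n₃) R)
    (a b : Fin n₃ → R) : Fin n₃ → R :=
  M⁻¹ *ᵥ ((M *ᵥ a) * (M *ᵥ b))

/-- The tensor `⋆_M`-product of an `ι × κ × n₃` tensor with a `κ × μ × n₃` tensor. -/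
def tenMul {n₃ : ℕ} {R : Type} [CommRing R] {ι κ μ : Type} [Fintype κ]
    (M : Matrix (Fin n₃) (Fin n₃) R)
    (A : ι → κ → (Fin n₃ → R)) (B : κ → μ → (Fin n₃ → R)) : ι → μ → (Fin n₃ → R) :=
  fun i j => ∑ ℓ, tubMul M (A i ℓ) (B ℓ j)

/-- The `⋆_M`-transpose of a tensor. -/
def tenTrans {ι κ γ : Type} (A : ι → κ → γ) : κ → ι → γ := fun i j => A j i

/-- The inner product of two same-size third order tensors. -/
def tenInner {n₃ : ℕ} {ι κ : Type} [Fintype ι] [Fintype κ]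
    (A B : ι → κ → (Fin n₃ → ℝ)) : ℝ :=
  ∑ i, ∑ j, ∑ k, A i j k * B i j k

/-- A square tensor is `⋆_M`-positive semidefinite if it is `⋆_M`-symmetric and
`⟨X, A ⋆_M X⟩ ≥ 0` for all `X` of size `n × 1 × n₃`. -/
def tenPSD {n₃ : ℕ} {ι : Type} [Fintype ι] (M : Matrix (Fin n₃) (Fin n₃) ℝ)
    (A : ι → ι → (Fin n₃ → ℝ)) : Prop :=
  tenTrans A = A ∧ ∀ X : ι → Fin 1 → (Fin n₃ → ℝ), 0 ≤ tenInner X (tenMul M A X)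

/-- The multiplicative identity tube `e_M = M⁻¹ 𝟙`. -/
def tubOne {n₃ : ℕ} (M : Matrix (Fin n₃) (Fin n₃) ℝ) : Fin n₃ → ℝ :=
  M⁻¹ *ᵥ (fun _ => 1)

/-- The `⋆_M`-identity tensor. -/
def tenId {n₃ : ℕ} {ι : Type} [DecidableEq ι] (M : Matrix (Fin n₃) (Fin n₃) ℝ) :
    ι → ι → (Fin n₃ → ℝ) :=
  fun i j => if i = j then tubOne M else 0

/-- The block matricization `mat_M(A)`: the `(i,j)` block is `diag(M *ᵥ A i j)`. -/
def tenMat {n₃ : ℕ} {ι κ : Type} (M : Matrix (Fin n₃) (Fin n₃) ℝ)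
    (A : ι → κ → (Fin n₃ → ℝ)) : Matrix (ι × Fin n₃) (κ × Fin n₃) ℝ :=
  Matrix.of fun p q => if p.2 = q.2 then (M *ᵥ A p.1 q.1) p.2 else 0


lemma cols_orthonormal {n₁ n₂ : ℕ} (B : Matrix (Fin n₁) (Fin n₂) ℝ) (ν : Fin n₂ → ℝ)
    (hB : Bᵀ * B = Matrix.diagonal ν) :
    Orthonormal ℝ (fun j : {j : Fin n₂ // ν j ≠ 0} =>
      (WithLp.equiv 2 (Fin n₁ → ℝ)).symm (fun k => B k j / Real.sqrt (ν j))) := by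
  have hBij : ∀ i j, ∑ k, B k i * B k j = if i = j then ν i else 0 := by
    intro i j
    have := congrFun (congrFun hB i) j
    simpa [Matrix.mul_apply, Matrix.diagonal] using this
  have hν0 : ∀ j, 0 ≤ ν j := by
    intro j
    have h : ∑ k, B k j * B k j = ν j := by simpa using hBij j j
    rw [← h]
    exact Finset.sum_nonneg fun k _ => mul_self_nonneg _
  rw [orthonormal_iff_ite]
  intro i j
  have hin : (inner (𝕜 := ℝ)
      ((WithLp.equiv 2 (Fin n₁ → ℝ)).symm (fun k => B k i / Real.sqrt (ν i)))
      ((WithLp.equiv 2 (Fin n₁ → ℝ)).symm (fun k => B k j / Real.sqrt (ν j))))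
      = (∑ k, B k i.1 * B k j.1) / (Real.sqrt (ν i) * Real.sqrt (ν j)) := by
    rw [PiLp.inner_apply, Finset.sum_div]
    refine Finset.sum_congr rfl fun k _ => ?_
    simp [RCLike.inner_apply, div_mul_div_comm]
    ring
  rw [hin, hBij]
  by_cases hij : i = j
  · subst hij
    simp only [if_pos rfl, Subtype.coe_eta]
    rw [Real.mul_self_sqrt (hν0 i)]
    exact div_self i.2
  · have h2 : i.1 ≠ j.1 := fun h => hij (Subtype.ext h)
    simp [h2, hij]

lemma matrix_svd_exists {n₁ n₂ : ℕ} (A : Matrix (Fin n₁) (Fin n₂) ℝ) :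
    ∃ (U : Matrix (Fin n₁) (Fin n₁) ℝ) (S : Matrix (Fin n₁) (Fin n₂) ℝ)
      (V : Matrix (Fin n₂) (Fin n₂) ℝ),
      Uᵀ * U = 1 ∧ Vᵀ * V = 1 ∧
      (∀ (i : Fin n₁) (j : Fin n₂), (i : ℕ) ≠ (j : ℕ) → S i j = 0) ∧ A = U * S * Vᵀ := by
  classical
  have hH : (Aᵀ * A).IsHermitian := by
    have := Matrix.isHermitian_conjTranspose_mul_self A
    simpa using this
  set μ : Fin n₂ → ℝ := hH.eigenvalues with hμ
  set V₀ : Matrix (Fin n₂) (Fin n₂) ℝ := (hH.eigenvectorUnitary : Matrix (Fin n₂) (Fin n₂) ℝ)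
    with hV₀def
  have hstar : star V₀ = V₀ᵀ := by
    ext i j; simp [Matrix.star_eq_conjTranspose, Matrix.conjTranspose_apply]
  have hV₀1 : V₀ᵀ * V₀ = 1 := by
    have h := Matrix.mem_unitaryGroup_iff'.mp hH.eigenvectorUnitary.2
    rwa [hstar] at h
  have hspec : Aᵀ * A = V₀ * Matrix.diagonal μ * V₀ᵀ := by
    have h := hH.spectral_theorem
    simp only [Unitary.conjStarAlgAut_apply, Unitary.coe_star] at h
    rw [hstar] at h
    simpa using h
  set π : Equiv.Perm (Fin n₂) := Tuple.sort (fun j => -μ j) with hπ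
  set ν : Fin n₂ → ℝ := fun j => μ (π j) with hν
  set W : Matrix (Fin n₂) (Fin n₂) ℝ := V₀.submatrix id π with hW
  have hWt : Wᵀ * W = 1 := by
    ext i j
    have h1 := congrFun (congrFun hV₀1 (π i)) (π j)
    simp only [Matrix.mul_apply, Matrix.transpose_apply, hW, Matrix.submatrix_apply, id] at h1 ⊢
    rw [h1]
    simp [Matrix.one_apply, EmbeddingLike.apply_eq_iff_eq]
  have hWW : W * Wᵀ = 1 := mul_eq_one_comm.mp hWt
  have hspec2 : Aᵀ * A = W * Matrix.diagonal ν * Wᵀ := by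
    rw [hspec]
    ext i j
    rw [Matrix.mul_apply, Matrix.mul_apply]
    simp only [Matrix.mul_diagonal, Matrix.transpose_apply, hW, Matrix.submatrix_apply, id]
    exact (Equiv.sum_comp π (fun x => V₀ i x * μ x * V₀ j x)).symm
  set B : Matrix (Fin n₁) (Fin n₂) ℝ := A * W with hB
  have hBtB : Bᵀ * B = Matrix.diagonal ν := by
    rw [hB, Matrix.transpose_mul]
    calc Wᵀ * Aᵀ * (A * W) = Wᵀ * (Aᵀ * A) * W := by
          rw [Matrix.mul_assoc, Matrix.mul_assoc, Matrix.mul_assoc]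
      _ = (Wᵀ * W) * Matrix.diagonal ν * (Wᵀ * W) := by
          rw [hspec2]; simp only [Matrix.mul_assoc]
      _ = Matrix.diagonal ν := by rw [hWt, Matrix.one_mul, Matrix.mul_one]
  have hBij : ∀ i j, ∑ k, B k i * B k j = if i = j then ν i else 0 := by
    intro i j
    have := congrFun (congrFun hBtB i) j
    simpa [Matrix.mul_apply, Matrix.diagonal] using this
  have hν0 : ∀ j, 0 ≤ ν j := by
    intro j
    have h : ∑ k, B k j * B k j = ν j := by simpa using hBij j j
    rw [← h]; exact Finset.sum_nonneg fun k _ => mul_self_nonneg _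
  have hcard : Fintype.card {j : Fin n₂ // ν j ≠ 0} ≤ n₁ := by
    have h := (cols_orthonormal B ν hBtB).linearIndependent
    have h2 := h.fintype_card_le_finrank
    simpa [finrank_euclideanSpace] using h2
  have hP : ∀ j : Fin n₂, ν j ≠ 0 → (j : ℕ) < n₁ := by
    intro j hj
    have hmono : Monotone ((fun j => -μ j) ∘ π) := Tuple.monotone_sort (fun j => -μ j)
    have hdown : ∀ i : Fin n₂, i ≤ j → ν i ≠ 0 := by
      intro i hij h0
      have h1 : -ν i ≤ -ν j := hmono hij
      have h2 : 0 < ν j := lt_of_le_of_ne (hν0 j) (Ne.symm hj)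
      rw [h0] at h1
      simp only [neg_zero, neg_nonpos] at h1
      linarith
    have hsub : Finset.Iic j ⊆ Finset.univ.filter (fun i => ν i ≠ 0) := by
      intro i hi
      simp only [Finset.mem_filter, Finset.mem_univ, true_and]
      exact hdown i (Finset.mem_Iic.mp hi)
    have h1 : (j : ℕ) + 1 ≤ (Finset.univ.filter (fun i => ν i ≠ 0)).card := by
      calc (j : ℕ) + 1 = (Finset.Iic j).card := (Fin.card_Iic j).symm
        _ ≤ _ := Finset.card_le_card hsub
    have h2 : (Finset.univ.filter (fun i => ν i ≠ 0)).card
        = Fintype.card {j : Fin n₂ // ν j ≠ 0} := (Fintype.card_subtype _).symm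
    omega
  set σf : Fin n₂ → ℝ := fun j => Real.sqrt (ν j) with hσ
  set s : Set (Fin n₁) := {i | ∃ h : (i : ℕ) < n₂, ν ⟨i, h⟩ ≠ 0} with hs
  set v : Fin n₁ → EuclideanSpace ℝ (Fin n₁) := fun i =>
    if h : (i : ℕ) < n₂ then
      (WithLp.equiv 2 (Fin n₁ → ℝ)).symm (fun k => B k ⟨i, h⟩ / σf ⟨i, h⟩) else 0 with hv
  have horth : Orthonormal ℝ (s.restrict v) := by
    have hON := cols_orthonormal B ν hBtB
    set e : ↥s → {j : Fin n₂ // ν j ≠ 0} := fun i => ⟨⟨i.1, i.2.choose⟩, i.2.choose_spec⟩ with he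
    have hinj : Function.Injective e := by
      intro a b hab
      apply Subtype.ext; apply Fin.ext
      have := congrArg (fun x => (x.1 : ℕ)) hab
      simpa [he] using this
    have hre : s.restrict v = (fun j : {j : Fin n₂ // ν j ≠ 0} =>
        (WithLp.equiv 2 (Fin n₁ → ℝ)).symm (fun k => B k j / Real.sqrt (ν j))) ∘ e := by
      funext i
      simp only [Set.restrict_apply, hv, Function.comp_apply, he]
      exact dif_pos i.2.choose
    rw [hre]
    exact hON.comp e hinj
  have hcardeq : Module.finrank ℝ (EuclideanSpace ℝ (Fin n₁)) = Fintype.card (Fin n₁) := by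
    simp [finrank_euclideanSpace]
  obtain ⟨b, hb⟩ := horth.exists_orthonormalBasis_extension_of_card_eq hcardeq
  set U : Matrix (Fin n₁) (Fin n₁) ℝ := Matrix.of (fun k i => b i k) with hU
  have hUt : Uᵀ * U = 1 := by
    ext i j
    have h := (orthonormal_iff_ite.mp b.orthonormal) i j
    rw [PiLp.inner_apply] at h
    simpa [Matrix.mul_apply, hU, Matrix.one_apply, RCLike.inner_apply, mul_comm] using h
  set S : Matrix (Fin n₁) (Fin n₂) ℝ :=
    Matrix.of (fun i j => if (i : ℕ) = (j : ℕ) then σf j else 0) with hS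
  have hBUS : B = U * S := by
    ext k j
    rw [Matrix.mul_apply]
    simp only [hU, hS, Matrix.of_apply, mul_ite, mul_zero]
    by_cases hj0 : ν j = 0
    · have hσ0 : σf j = 0 := by rw [hσ]; simp [hj0]
      have hBkj : B k j = 0 := by
        have h : ∑ k, B k j * B k j = ν j := by simpa using hBij j j
        rw [hj0] at h
        have := (Finset.sum_eq_zero_iff_of_nonneg
          (fun k _ => mul_self_nonneg (B k j))).mp h k (Finset.mem_univ k)
        exact mul_self_eq_zero.mp this
      rw [hBkj]
      refine (Finset.sum_eq_zero fun i _ => ?_).symm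
      rw [hσ0, mul_zero, ite_self]
    · have hjn : (j : ℕ) < n₁ := hP j hj0
      set i₀ : Fin n₁ := ⟨j, hjn⟩ with hi₀
      have hcond : ∀ i : Fin n₁, ((i : ℕ) = (j : ℕ)) = (i = i₀) :=
        fun i => propext ⟨fun h => Fin.ext h, fun h => by rw [h]⟩
      simp only [hcond]
      rw [Finset.sum_ite_eq' Finset.univ i₀ (fun i => b i k * σf j), if_pos (Finset.mem_univ i₀)]
      have hi₀s : i₀ ∈ s := by
        refine ⟨by simpa [hi₀] using j.isLt, ?_⟩
        have : (⟨(i₀ : ℕ), by simpa [hi₀] using j.isLt⟩ : Fin n₂) = j := by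
          apply Fin.ext; simp [hi₀]
        rw [this]; exact hj0
      have hbv : b i₀ = v i₀ := hb i₀ hi₀s
      have hlt : (i₀ : ℕ) < n₂ := by simpa [hi₀] using j.isLt
      have hveq : v i₀ = (WithLp.equiv 2 (Fin n₁ → ℝ)).symm (fun k => B k j / σf j) := by
        simp only [hv]
        rw [dif_pos (show ((⟨(j : ℕ), hjn⟩ : Fin n₁) : ℕ) < n₂ from j.isLt)]
      have hσne : σf j ≠ 0 := by
        rw [hσ]
        exact Real.sqrt_ne_zero'.mpr (lt_of_le_of_ne (hν0 j) (Ne.symm hj0))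
      rw [hbv, hveq]
      show B k j = B k j / σf j * σf j
      exact (div_mul_cancel₀ _ hσne).symm
  refine ⟨U, S, W, hUt, hWt, ?_, ?_⟩
  · intro i j hij
    simp [hS, hij]
  · have hA : A = B * Wᵀ := by rw [hB, Matrix.mul_assoc, hWW, Matrix.mul_one]
    rw [hA, hBUS]


/-- Slice-wise matricization in the transform domain. -/
def hatS {n₃ : ℕ} (M : Matrix (Fin n₃) (Fin n₃) ℝ) {ι κ : Type}
    (X : ι → κ → (Fin n₃ → ℝ)) (k : Fin n₃) : Matrix ι κ ℝ :=
  Matrix.of fun i j => (M *ᵥ X i j) k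

/-- Inverse of slice-wise matricization. -/
def unhatS {n₃ : ℕ} (M : Matrix (Fin n₃) (Fin n₃) ℝ) {ι κ : Type}
    (F : Fin n₃ → Matrix ι κ ℝ) : ι → κ → (Fin n₃ → ℝ) :=
  fun i j => M⁻¹ *ᵥ (fun k => F k i j)

section hatlemmas

variable {n₃ : ℕ} {M : Matrix (Fin n₃) (Fin n₃) ℝ} (hM : IsUnit M.det)

include hM

lemma mulVec_inv_cancel (v : Fin n₃ → ℝ) : M *ᵥ (M⁻¹ *ᵥ v) = v := by
  rw [Matrix.mulVec_mulVec, Matrix.mul_nonsing_inv _ hM, Matrix.one_mulVec]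

lemma inv_mulVec_cancel (v : Fin n₃ → ℝ) : M⁻¹ *ᵥ (M *ᵥ v) = v := by
  rw [Matrix.mulVec_mulVec, Matrix.nonsing_inv_mul _ hM, Matrix.one_mulVec]

lemma hatS_unhatS {ι κ : Type} (F : Fin n₃ → Matrix ι κ ℝ) (k : Fin n₃) :
    hatS M (unhatS M F) k = F k := by
  ext i j
  simp only [hatS, unhatS, Matrix.of_apply, mulVec_inv_cancel hM]

lemma hatS_inj {ι κ : Type} (X Y : ι → κ → (Fin n₃ → ℝ))
    (h : ∀ k, hatS M X k = hatS M Y k) : X = Y := by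
  funext i j
  have h2 : M *ᵥ X i j = M *ᵥ Y i j := by
    funext k
    exact congrFun (congrFun (h k) i) j
  have := congrArg (fun v => M⁻¹ *ᵥ v) h2
  simpa [inv_mulVec_cancel hM] using this

lemma hatS_tenMul {ι κ μ : Type} [Fintype κ] (X : ι → κ → (Fin n₃ → ℝ))
    (Y : κ → μ → (Fin n₃ → ℝ)) (k : Fin n₃) :
    hatS M (tenMul M X Y) k = hatS M X k * hatS M Y k := by
  ext i j
  have hsum : M *ᵥ (tenMul M X Y i j) = ∑ ℓ, (M *ᵥ X i ℓ) * (M *ᵥ Y ℓ j) := by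
    show M.mulVecLin (∑ ℓ, tubMul M (X i ℓ) (Y ℓ j)) = _
    rw [map_sum]
    refine Finset.sum_congr rfl fun ℓ _ => ?_
    show M *ᵥ (M⁻¹ *ᵥ _) = _
    rw [mulVec_inv_cancel hM]
  simp only [hatS, Matrix.of_apply, Matrix.mul_apply, hsum, Finset.sum_apply, Pi.mul_apply]

lemma hatS_tenTrans {ι κ : Type} (X : ι → κ → (Fin n₃ → ℝ)) (k : Fin n₃) :
    hatS M (tenTrans X) k = (hatS M X k)ᵀ := rfl

lemma hatS_tenId {ι : Type} [DecidableEq ι] (k : Fin n₃) :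
    hatS M (tenId (ι := ι) M) k = 1 := by
  ext i j
  simp only [hatS, tenId, Matrix.of_apply, Matrix.one_apply]
  by_cases h : i = j
  · simp only [h, if_pos rfl]
    show (M *ᵥ tubOne M) k = 1
    rw [tubOne, mulVec_inv_cancel hM]
  · simp only [if_neg h]
    show (M *ᵥ (0 : Fin n₃ → ℝ)) k = 0
    rw [Matrix.mulVec_zero]
    rfl

end hatlemmas

/-- Existence of the `⋆_M`-SVD: every `n₁ × n₂ × n₃` tensor `A` factors as
`A = U ⋆_M S ⋆_M Vᵀ` with `U, V` `⋆_M`-orthogonal and `S` f-diagonal. -/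
theorem starM_svd_exists (n₁ n₂ n₃ : ℕ) (hn₃ : 1 ≤ n₃)
    (M : Matrix (Fin n₃) (Fin n₃) ℝ) (hM : IsUnit M.det)
    (A : Fin n₁ → Fin n₂ → (Fin n₃ → ℝ)) :
    ∃ (U : Fin n₁ → Fin n₁ → (Fin n₃ → ℝ))
      (S : Fin n₁ → Fin n₂ → (Fin n₃ → ℝ))
      (V : Fin n₂ → Fin n₂ → (Fin n₃ → ℝ)),
      tenMul M (tenTrans U) U = tenId M ∧ tenMul M U (tenTrans U) = tenId M ∧
      tenMul M (tenTrans V) V = tenId M ∧ tenMul M V (tenTrans V) = tenId M ∧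
      (∀ (i : Fin n₁) (j : Fin n₂), (i : ℕ) ≠ (j : ℕ) → S i j = 0) ∧
      A = tenMul M U (tenMul M S (tenTrans V)) := by
  classical
  have h := fun k => matrix_svd_exists (hatS M A k)
  choose Uf Sf Vf hU1 hV1 hSd hAf using h
  refine ⟨unhatS M Uf, unhatS M Sf, unhatS M Vf, ?_, ?_, ?_, ?_, ?_, ?_⟩
  · apply hatS_inj hM
    intro k
    rw [hatS_tenMul hM, hatS_tenTrans hM, hatS_unhatS hM, hatS_tenId hM]
    exact hU1 k
  · apply hatS_inj hM
    intro k
    rw [hatS_tenMul hM, hatS_tenTrans hM, hatS_unhatS hM, hatS_tenId hM]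
    exact mul_eq_one_comm.mp (hU1 k)
  · apply hatS_inj hM
    intro k
    rw [hatS_tenMul hM, hatS_tenTrans hM, hatS_unhatS hM, hatS_tenId hM]
    exact hV1 k
  · apply hatS_inj hM
    intro k
    rw [hatS_tenMul hM, hatS_tenTrans hM, hatS_unhatS hM, hatS_tenId hM]
    exact mul_eq_one_comm.mp (hV1 k)
  · intro i j hij
    show M⁻¹ *ᵥ (fun k => Sf k i j) = 0
    have hz : (fun k => Sf k i j) = (0 : Fin n₃ → ℝ) := by
      funext k
      exact hSd k i j hij
    rw [hz, Matrix.mulVec_zero]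
  · apply hatS_inj hM
    intro k
    rw [hatS_tenMul hM, hatS_tenMul hM, hatS_tenTrans hM, hatS_unhatS hM, hatS_unhatS hM,
      hatS_unhatS hM, hAf k, Matrix.mul_assoc]

end
end

section
/- Fix n₃ ≥ 1 and an orthogonal matrix M ∈ ℝ^{n₃×n₃} (MᵀM = I), and let A be a tensor of size n₁ × n₂ × n₃ over ℝ with Â = A ×₃ M. Define γ = Σ_{k=1}^{n₃} trace(((Â_{:,:,k})ᵀ Â_{:,:,k})^{1/2}), where for a positive semidefinite real matrix P, P^{1/2} denotes its positive semidefinite square root (so γ is the sum over k of the nuclear norms, i.e. sums of singular values, of the frontal slices of Â). Consider pairs (W₁, W₂) of ⋆_M-symmetric tensors of sizes n₁ × n₁ × n₃ and n₂ × n₂ × n₃ such that the block tensor W of size (n₁+n₂) × (n₁+n₂) × n₃ with blocks W₁ (top-left), A (top-right), Aᵀ (bottom-left), and W₂ (bottom-right) is ⋆_M-positive semidefinite. Then (i) for every such pair, ½⟨ℐ_M, W⟩ ≥ γ, where ℐ_M is the (n₁+n₂) × (n₁+n₂) × n₃ ⋆_M-identity tensor, and (ii) there exists such a pair attaining ½⟨ℐ_M,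 W⟩ = γ. -/
open Matrix BigOperators Kronecker

noncomputable section

/-- The `(n₁+n₂) × (n₁+n₂) × n₃` block tensor with blocks `W₁` (top-left), `A` (top-right),
`Aᵀ` (bottom-left) and `W₂` (bottom-right). -/
def blockTensor {n₃ n₁ n₂ : ℕ} (W₁ : Fin n₁ → Fin n₁ → (Fin n₃ → ℝ))
    (A : Fin n₁ → Fin n₂ → (Fin n₃ → ℝ)) (W₂ : Fin n₂ → Fin n₂ → (Fin n₃ → ℝ)) :
    (Fin n₁ ⊕ Fin n₂) → (Fin n₁ ⊕ Fin n₂) → (Fin n₃ → ℝ) :=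
  fun p q =>
    match p, q with
    | Sum.inl i, Sum.inl j => W₁ i j
    | Sum.inl i, Sum.inr j => A i j
    | Sum.inr i, Sum.inl j => A j i
    | Sum.inr i, Sum.inr j => W₂ i j


lemma colcol {m n : ℕ} (C D : Matrix (Fin m) (Fin n) ℝ) (X : Matrix (Fin m) (Fin m) ℝ)
    (i : Fin n) :
    (fun j => C j i) ⬝ᵥ (X *ᵥ fun j => D j i) = (Cᵀ * X * D) i i := by
  simp only [dotProduct, mulVec, Matrix.mul_apply, transpose_apply, Finset.sum_mul,
    Finset.mul_sum, dotProduct]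
  rw [Finset.sum_comm]
  exact Finset.sum_congr rfl fun l _ => Finset.sum_congr rfl fun j _ => by ring

lemma colcol0 {m n : ℕ} (C D : Matrix (Fin m) (Fin n) ℝ) (i : Fin n) :
    (fun j => C j i) ⬝ᵥ (fun j => D j i) = (Cᵀ * D) i i := by
  simp only [dotProduct, Matrix.mul_apply, transpose_apply]

lemma col_single {m n : ℕ} (C : Matrix (Fin m) (Fin n) ℝ) (i : Fin n) :
    C *ᵥ Pi.single i 1 = fun j => C j i := by
  funext j; simp [mulVec_single]

lemma entry_quad {m n : ℕ} (C : Matrix (Fin m) (Fin n) ℝ) (X : Matrix (Fin m) (Fin m) ℝ)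
    (i : Fin n) :
    (C *ᵥ Pi.single i 1) ⬝ᵥ (X *ᵥ (C *ᵥ Pi.single i 1)) = (Cᵀ * X * C) i i := by
  rw [col_single, colcol]

lemma quad_expand {m n : ℕ} (C : Matrix (Fin m) (Fin n) ℝ) (d : Fin n → ℝ)
    (a : Fin m → ℝ) :
    a ⬝ᵥ ((C * diagonal d * Cᵀ) *ᵥ a) = ∑ i, d i * ((Cᵀ *ᵥ a) i)^2 := by
  rw [← mulVec_mulVec, ← mulVec_mulVec, dotProduct_mulVec, ← mulVec_transpose]
  unfold dotProduct
  refine Finset.sum_congr rfl fun i _ => ?_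
  rw [mulVec_diagonal]
  ring

theorem matrix_core {n₁ n₂ : ℕ} (B : Matrix (Fin n₁) (Fin n₂) ℝ)
    (P : Matrix (Fin n₂) (Fin n₂) ℝ) (hP : P.PosSemidef) (hPP : P * P = Bᵀ * B) :
    (∀ (W₁ : Matrix (Fin n₁) (Fin n₁) ℝ) (W₂ : Matrix (Fin n₂) (Fin n₂) ℝ),
      (∀ (x : Fin n₁ → ℝ) (y : Fin n₂ → ℝ),
        0 ≤ x ⬝ᵥ (W₁ *ᵥ x) + 2 * (x ⬝ᵥ (B *ᵥ y)) + y ⬝ᵥ (W₂ *ᵥ y)) →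
      2 * P.trace ≤ W₁.trace + W₂.trace) ∧
    (∃ (W₁ : Matrix (Fin n₁) (Fin n₁) ℝ) (W₂ : Matrix (Fin n₂) (Fin n₂) ℝ),
      W₁ᵀ = W₁ ∧ W₂ᵀ = W₂ ∧
      (∀ (x : Fin n₁ → ℝ) (y : Fin n₂ → ℝ),
        0 ≤ x ⬝ᵥ (W₁ *ᵥ x) + 2 * (x ⬝ᵥ (B *ᵥ y)) + y ⬝ᵥ (W₂ *ᵥ y)) ∧
      W₁.trace + W₂.trace = 2 * P.trace) := by
  have hH := hP.isHermitian
  set V : Matrix (Fin n₂) (Fin n₂) ℝ := (hH.eigenvectorUnitary : Matrix (Fin n₂) (Fin n₂) ℝ) with hVdef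
  set s : Fin n₂ → ℝ := hH.eigenvalues with hsdef
  have hs : ∀ i, 0 ≤ s i := hP.eigenvalues_nonneg
  have hVV : Vᵀ * V = 1 := by
    have := (hH.eigenvectorUnitary).2.1
    simpa [hVdef, Matrix.star_eq_conjTranspose] using this
  have hVV' : V * Vᵀ = 1 := by
    have := (hH.eigenvectorUnitary).2.2
    simpa [hVdef, Matrix.star_eq_conjTranspose] using this
  have hspec : P = V * diagonal s * Vᵀ := by
    have := hH.spectral_theorem
    simpa [hVdef, hsdef, Matrix.star_eq_conjTranspose, Function.comp] using this
  have hBtB : Bᵀ * B = V * diagonal (fun i => s i * s i) * Vᵀ := by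
    rw [← hPP, hspec]
    rw [show V * diagonal s * Vᵀ * (V * diagonal s * Vᵀ)
        = V * (diagonal s * (Vᵀ * V) * diagonal s) * Vᵀ by simp only [Matrix.mul_assoc]]
    rw [hVV, Matrix.mul_one, diagonal_mul_diagonal]
  have htrP : P.trace = ∑ i, s i := by
    rw [hspec, trace_mul_cycle, hVV, Matrix.one_mul, trace_diagonal]
  set g : Fin n₂ → ℝ := fun i => if s i = 0 then 0 else (s i)⁻¹ with hgdef
  have hgs : ∀ i, g i * (s i * s i) * g i * g i = g i := by
    intro i; by_cases hsi : s i = 0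
    · simp [hgdef, hsi]
    · simp only [hgdef, if_neg hsi]; field_simp
  have hBVBV : (B * V)ᵀ * (B * V) = diagonal (fun i => s i * s i) := by
    rw [Matrix.transpose_mul]
    rw [show Vᵀ * Bᵀ * (B * V) = Vᵀ * (Bᵀ * B) * V by simp only [Matrix.mul_assoc]]
    rw [hBtB, show Vᵀ * (V * diagonal (fun i => s i * s i) * Vᵀ) * V
        = (Vᵀ * V) * diagonal (fun i => s i * s i) * (Vᵀ * V) by simp only [Matrix.mul_assoc]]
    rw [hVV, Matrix.one_mul, Matrix.mul_one]
  set C : Matrix (Fin n₁) (Fin n₂) ℝ := B * V * diagonal g with hCdef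
  have hCtC : Cᵀ * C = diagonal (fun i => g i * (s i * s i) * g i) := by
    rw [hCdef, Matrix.transpose_mul, diagonal_transpose]
    rw [show diagonal g * (B * V)ᵀ * (B * V * diagonal g)
        = diagonal g * ((B * V)ᵀ * (B * V)) * diagonal g by simp only [Matrix.mul_assoc]]
    rw [hBVBV, diagonal_mul_diagonal, diagonal_mul_diagonal]
  have hCBV : Cᵀ * (B * V) = diagonal (fun i => g i * (s i * s i)) := by
    rw [hCdef, Matrix.transpose_mul, diagonal_transpose, Matrix.mul_assoc, hBVBV,
      diagonal_mul_diagonal]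
  constructor
  · -- lower bound
    intro W₁ W₂ hbl
    have hW₁psd : ∀ x : Fin n₁ → ℝ, 0 ≤ x ⬝ᵥ (W₁ *ᵥ x) := by
      intro x
      have := hbl x 0
      simpa using this
    have key : ∀ i, 2 * s i ≤ (Cᵀ * W₁ * C) i i + (Vᵀ * W₂ * V) i i := by
      intro i
      have h := hbl (-(C *ᵥ Pi.single i 1)) (V *ᵥ Pi.single i 1)
      rw [mulVec_neg, neg_dotProduct, dotProduct_neg, neg_neg, entry_quad] at h
      rw [entry_quad] at h
      have h3 : (-(C *ᵥ Pi.single i 1)) ⬝ᵥ (B *ᵥ (V *ᵥ Pi.single i 1)) = -(s i) := by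
        rw [neg_dotProduct, mulVec_mulVec, col_single, col_single, colcol0, hCBV,
          diagonal_apply_eq]
        by_cases hsi : s i = 0
        · simp [hgdef, hsi]
        · simp only [hgdef, if_neg hsi]; field_simp
      rw [h3] at h
      linarith
    have hsum2 : ∑ i, (2 * s i) ≤ ∑ i, ((Cᵀ * W₁ * C) i i + (Vᵀ * W₂ * V) i i) :=
      Finset.sum_le_sum (fun i _ => key i)
    set Pr : Matrix (Fin n₁) (Fin n₁) ℝ := C * Cᵀ with hPrdef
    have htr1 : ∑ i, (Cᵀ * W₁ * C) i i = (W₁ * Pr).trace := by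
      rw [show (W₁ * Pr).trace = (Cᵀ * W₁ * C).trace by
        rw [hPrdef, ← Matrix.mul_assoc, trace_mul_cycle]]
      rfl
    have htr2 : ∑ i, (Vᵀ * W₂ * V) i i = W₂.trace := by
      rw [show W₂.trace = (Vᵀ * W₂ * V).trace by
        rw [trace_mul_cycle, hVV', Matrix.one_mul]]
      rfl
    have hPrsym : Prᵀ = Pr := by rw [hPrdef, Matrix.transpose_mul, transpose_transpose]
    have hCe : C * diagonal (fun i => g i * (s i * s i) * g i) = C := by
      ext i j
      rw [mul_diagonal, hCdef, mul_diagonal]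
      by_cases hsj : s j = 0
      · simp [hgdef, hsj]
      · simp only [hgdef, if_neg hsj]; field_simp
    have hPr2 : Pr * Pr = Pr := by
      rw [hPrdef, show C * Cᵀ * (C * Cᵀ) = C * (Cᵀ * C) * Cᵀ by
        simp only [Matrix.mul_assoc], hCtC, hCe]
    set Q : Matrix (Fin n₁) (Fin n₁) ℝ := 1 - Pr with hQdef
    have hQsym : Qᵀ = Q := by rw [hQdef, transpose_sub, transpose_one, hPrsym]
    have hQ2 : Q * Q = Q := by
      rw [hQdef, Matrix.sub_mul, Matrix.mul_sub, Matrix.mul_sub, hPr2]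
      simp
    have htrQ : 0 ≤ (W₁ * Q).trace := by
      have heq : (W₁ * Q).trace = (Q * W₁ * Q).trace := by
        conv_lhs => rw [← hQ2, ← Matrix.mul_assoc, trace_mul_comm, ← Matrix.mul_assoc]
      rw [heq]
      have hdg : ∀ i, 0 ≤ (Q * W₁ * Q) i i := by
        intro i
        have := hW₁psd (Q *ᵥ Pi.single i 1)
        rwa [entry_quad, hQsym] at this
      exact Finset.sum_nonneg (fun i _ => hdg i)
    have hsplit : W₁.trace = (W₁ * Pr).trace + (W₁ * Q).trace := by
      rw [← trace_add, ← Matrix.mul_add, hQdef]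
      simp
    have h2P : 2 * P.trace = ∑ i, 2 * s i := by rw [htrP, Finset.mul_sum]
    rw [h2P]
    calc ∑ i, 2 * s i ≤ ∑ i, ((Cᵀ * W₁ * C) i i + (Vᵀ * W₂ * V) i i) := hsum2
      _ = (W₁ * Pr).trace + W₂.trace := by rw [Finset.sum_add_distrib, htr1, htr2]
      _ ≤ W₁.trace + W₂.trace := by linarith
  · -- existence
    have hPsym : Pᵀ = P := by
      have h := hH.eq
      rw [← Matrix.conjTranspose_eq_transpose_of_trivial]
      exact h
    refine ⟨(B * V) * diagonal g * (B * V)ᵀ, P, ?_, hPsym, ?_, ?_⟩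
    · rw [Matrix.transpose_mul ((B * V) * diagonal g) ((B * V)ᵀ), transpose_transpose,
        Matrix.transpose_mul (B * V) (diagonal g), diagonal_transpose, ← Matrix.mul_assoc]
    · intro x y
      set u : Fin n₂ → ℝ := (B * V)ᵀ *ᵥ x with hudef
      set w : Fin n₂ → ℝ := Vᵀ *ᵥ y with hwdef
      have hx : x ⬝ᵥ (((B * V) * diagonal g * (B * V)ᵀ) *ᵥ x) = ∑ i, g i * (u i)^2 :=
        quad_expand (B * V) g x
      have hy : y ⬝ᵥ (P *ᵥ y) = ∑ i, s i * (w i)^2 := by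
        rw [hspec]; exact quad_expand V s y
      have hxy : x ⬝ᵥ (B *ᵥ y) = ∑ i, u i * w i := by
        have hB : B *ᵥ y = (B * V) *ᵥ w := by
          rw [hwdef, mulVec_mulVec, Matrix.mul_assoc, hVV', Matrix.mul_one]
        rw [hB, dotProduct_mulVec, ← mulVec_transpose, ← hudef]
        rfl
      have hu0 : ∀ i, s i = 0 → u i = 0 := by
        intro i hsi
        have hzero : ∑ j, ((B * V) j i)^2 = 0 := by
          have : ((B * V)ᵀ * (B * V)) i i = 0 := by rw [hBVBV, diagonal_apply_eq, hsi, mul_zero]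
          rw [← this, Matrix.mul_apply]
          exact Finset.sum_congr rfl fun j _ => by rw [transpose_apply]; ring
        have hcol : ∀ j, (B * V) j i = 0 := by
          intro j
          have := (Finset.sum_eq_zero_iff_of_nonneg
            (fun j _ => sq_nonneg ((B * V) j i))).mp hzero j (Finset.mem_univ j)
          exact pow_eq_zero_iff (by norm_num) |>.mp this
        rw [hudef, mulVec, dotProduct]
        exact Finset.sum_eq_zero fun j _ => by rw [transpose_apply, hcol j, zero_mul]
      rw [hx, hy, hxy, Finset.mul_sum, ← Finset.sum_add_distrib, ← Finset.sum_add_distrib]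
      refine Finset.sum_nonneg fun i _ => ?_
      by_cases hsi : s i = 0
      · rw [hu0 i hsi, hsi]
        simp [hgdef, hsi]
      · have hgi : g i = (s i)⁻¹ := by simp [hgdef, hsi]
        have hspos : 0 < s i := lt_of_le_of_ne (hs i) (Ne.symm hsi)
        rw [hgi]
        have h1 : (s i)⁻¹ * (u i)^2 + 2 * (u i * w i) + s i * (w i)^2
            = (s i)⁻¹ * (u i + s i * w i)^2 := by
          field_simp
          ring
        rw [h1]
        positivity
    · have htrW₁ : ((B * V) * diagonal g * (B * V)ᵀ).trace = ∑ i, s i := by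
        rw [trace_mul_cycle, hBVBV, diagonal_mul_diagonal, trace_diagonal]
        refine Finset.sum_congr rfl fun i _ => ?_
        by_cases hsi : s i = 0
        · simp [hgdef, hsi]
        · simp only [hgdef, if_neg hsi]; field_simp
      rw [htrW₁, htrP]
      ring

section glueLemmas

variable {n₃ : ℕ} (M : Matrix (Fin n₃) (Fin n₃) ℝ)

lemma dot_hat (hM : Mᵀ * M = 1) (a b : Fin n₃ → ℝ) :
    (M *ᵥ a) ⬝ᵥ (M *ᵥ b) = a ⬝ᵥ b := by
  rw [dotProduct_mulVec, ← mulVec_transpose, mulVec_mulVec, hM, one_mulVec]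

lemma mulVec_sum' {ι : Type} (s : Finset ι) (f : ι → (Fin n₃ → ℝ)) :
    M *ᵥ (∑ ℓ ∈ s, f ℓ) = ∑ ℓ ∈ s, M *ᵥ f ℓ := by
  have h := map_sum (Matrix.mulVecLin M) f s
  simp only [Matrix.mulVecLin_apply] at h
  exact h

lemma hat_unhat (hM' : M * M⁻¹ = 1) (v : Fin n₃ → ℝ) :
    M *ᵥ (M⁻¹ *ᵥ v) = v := by
  rw [mulVec_mulVec, hM', one_mulVec]

lemma tenInner_hat (hM : Mᵀ * M = 1) {ι κ : Type} [Fintype ι] [Fintype κ]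
    (X Y : ι → κ → (Fin n₃ → ℝ)) :
    tenInner X Y = ∑ k, ∑ i, ∑ j, (M *ᵥ X i j) k * (M *ᵥ Y i j) k := by
  unfold tenInner
  calc ∑ i, ∑ j, ∑ k, X i j k * Y i j k
      = ∑ i, ∑ j, ∑ k, (M *ᵥ X i j) k * (M *ᵥ Y i j) k := by
        refine Finset.sum_congr rfl fun i _ => Finset.sum_congr rfl fun j _ => ?_
        have := dot_hat M hM (X i j) (Y i j)
        simpa [dotProduct] using this.symm
    _ = ∑ i, ∑ k, ∑ j, (M *ᵥ X i j) k * (M *ᵥ Y i j) k :=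
        Finset.sum_congr rfl fun i _ => Finset.sum_comm
    _ = ∑ k, ∑ i, ∑ j, (M *ᵥ X i j) k * (M *ᵥ Y i j) k := Finset.sum_comm

lemma hat_tenMul (hM' : M * M⁻¹ = 1) {ι κ μ : Type} [Fintype κ]
    (W : ι → κ → (Fin n₃ → ℝ)) (X : κ → μ → (Fin n₃ → ℝ)) (i : ι) (m : μ) (k : Fin n₃) :
    (M *ᵥ tenMul M W X i m) k = ∑ q, (M *ᵥ W i q) k * (M *ᵥ X q m) k := by
  unfold tenMul tubMul
  rw [mulVec_sum', Finset.sum_apply]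
  exact Finset.sum_congr rfl fun q _ => by rw [hat_unhat M hM', Pi.mul_apply]

lemma quad_slices (hM : Mᵀ * M = 1) (hM' : M * M⁻¹ = 1) {ι : Type} [Fintype ι]
    (W : ι → ι → (Fin n₃ → ℝ)) (X : ι → Fin 1 → (Fin n₃ → ℝ)) :
    tenInner X (tenMul M W X) = ∑ k, (fun p => (M *ᵥ X p 0) k) ⬝ᵥ
      ((Matrix.of fun p q => (M *ᵥ W p q) k) *ᵥ (fun p => (M *ᵥ X p 0) k)) := by
  rw [tenInner_hat M hM]
  refine Finset.sum_congr rfl fun k _ => ?_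
  rw [dotProduct]
  refine Finset.sum_congr rfl fun p _ => ?_
  rw [Fin.sum_univ_one, hat_tenMul M hM']
  simp only [mulVec, dotProduct, Matrix.of_apply, Finset.mul_sum]

lemma slice_psd (hM : Mᵀ * M = 1) (hM' : M * M⁻¹ = 1) {ι : Type} [Fintype ι]
    (W : ι → ι → (Fin n₃ → ℝ))
    (h : ∀ X : ι → Fin 1 → (Fin n₃ → ℝ), 0 ≤ tenInner X (tenMul M W X))
    (k : Fin n₃) (z : ι → ℝ) :
    0 ≤ z ⬝ᵥ ((Matrix.of fun p q => (M *ᵥ W p q) k) *ᵥ z) := by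
  classical
  set X : ι → Fin 1 → (Fin n₃ → ℝ) :=
    fun p _ => M⁻¹ *ᵥ (fun k' => if k' = k then z p else 0) with hX
  have hXhat : ∀ p, M *ᵥ X p 0 = fun k' => if k' = k then z p else 0 :=
    fun p => hat_unhat M hM' _
  have hh := h X
  rw [quad_slices M hM hM' W X] at hh
  rw [Finset.sum_eq_single k (fun k' _ hk' => by
    have hz0 : (fun p => (M *ᵥ X p 0) k') = 0 := by
      funext p; rw [hXhat]; simp [hk']
    rw [hz0, zero_dotProduct]) (by simp)] at hh
  have hz : (fun p => (M *ᵥ X p 0) k) = z := by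
    funext p; rw [hXhat]; simp
  rwa [hz] at hh

lemma block_hat {n₁ n₂ : ℕ} (W₁ : Fin n₁ → Fin n₁ → (Fin n₃ → ℝ))
    (A : Fin n₁ → Fin n₂ → (Fin n₃ → ℝ)) (W₂ : Fin n₂ → Fin n₂ → (Fin n₃ → ℝ)) (k : Fin n₃) :
    (Matrix.of fun p q => (M *ᵥ blockTensor W₁ A W₂ p q) k) =
    Matrix.fromBlocks (Matrix.of fun i j => (M *ᵥ W₁ i j) k)
      (Matrix.of fun i j => (M *ᵥ A i j) k)
      ((Matrix.of fun i j => (M *ᵥ A i j) k)ᵀ)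
      (Matrix.of fun i j => (M *ᵥ W₂ i j) k) := by
  ext p q
  rcases p with i | i <;> rcases q with j | j <;> rfl

lemma block_quad {n₁ n₂ : ℕ} (W₁h : Matrix (Fin n₁) (Fin n₁) ℝ)
    (Ah : Matrix (Fin n₁) (Fin n₂) ℝ) (W₂h : Matrix (Fin n₂) (Fin n₂) ℝ)
    (x : Fin n₁ → ℝ) (y : Fin n₂ → ℝ) :
    (Sum.elim x y) ⬝ᵥ ((Matrix.fromBlocks W₁h Ah Ahᵀ W₂h) *ᵥ Sum.elim x y)
    = x ⬝ᵥ (W₁h *ᵥ x) + 2 * (x ⬝ᵥ (Ah *ᵥ y)) + y ⬝ᵥ (W₂h *ᵥ y) := by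
  rw [fromBlocks_mulVec, sumElim_dotProduct_sumElim, dotProduct_add, dotProduct_add]
  have h : y ⬝ᵥ (Ahᵀ *ᵥ x) = x ⬝ᵥ (Ah *ᵥ y) := by
    rw [dotProduct_mulVec, vecMul_transpose, dotProduct_comm]
  simp only [Sum.elim_comp_inl, Sum.elim_comp_inr]
  rw [h]; ring

lemma inner_id (hM : Mᵀ * M = 1) (hM' : M * M⁻¹ = 1) {ι : Type} [Fintype ι] [DecidableEq ι]
    (W : ι → ι → (Fin n₃ → ℝ)) :
    tenInner (tenId M) W = ∑ k, ∑ p, (M *ᵥ W p p) k := by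
  rw [tenInner_hat M hM]
  refine Finset.sum_congr rfl fun k _ => Finset.sum_congr rfl fun p _ => ?_
  rw [Finset.sum_eq_single p (fun q _ hq => by
      simp [tenId, Ne.symm hq, mulVec_zero]) (by simp)]
  have h1 : M *ᵥ tenId M p p = fun _ => (1:ℝ) := by
    simp only [tenId, if_pos rfl, tubOne]
    exact hat_unhat M hM' _
  rw [h1, one_mul]

end glueLemmas

/-- For orthogonal `M`, let `γ = Σ_k trace(((Â_{:,:,k})ᵀ Â_{:,:,k})^{1/2})` be
the sum of the nuclear norms of the frontal slices of `Â = A ×₃ M` (here `P k` is the PSD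
square root of `(Â_{:,:,k})ᵀ Â_{:,:,k}`). Then (i) every pair `(W₁, W₂)` of `⋆_M`-symmetric
tensors making the block tensor `W = [[W₁, A], [Aᵀ, W₂]]` `⋆_M`-PSD satisfies
`γ ≤ ½⟨ℐ_M, W⟩`, and (ii) some such pair attains `½⟨ℐ_M, W⟩ = γ`. -/
theorem nuclear_norm_MSDP (n₁ n₂ n₃ : ℕ) (hn₃ : 1 ≤ n₃)
    (M : Matrix (Fin n₃) (Fin n₃) ℝ) (hM : Mᵀ * M = 1)
    (A : Fin n₁ → Fin n₂ → (Fin n₃ → ℝ))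
    (P : Fin n₃ → Matrix (Fin n₂) (Fin n₂) ℝ)
    (hP : ∀ k : Fin n₃, (P k).PosSemidef ∧
      P k * P k = (Matrix.of fun i j : _ => (M *ᵥ A i j) k)ᵀ *
        (Matrix.of fun i j : _ => (M *ᵥ A i j) k))
    (γ : ℝ) (hγ : γ = ∑ k : Fin n₃, (P k).trace) :
    (∀ (W₁ : Fin n₁ → Fin n₁ → (Fin n₃ → ℝ)) (W₂ : Fin n₂ → Fin n₂ → (Fin n₃ → ℝ)),
      tenTrans W₁ = W₁ → tenTrans W₂ = W₂ →
      tenPSD M (blockTensor W₁ A W₂) →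
      γ ≤ (1 / 2) * tenInner (tenId M) (blockTensor W₁ A W₂)) ∧
    (∃ (W₁ : Fin n₁ → Fin n₁ → (Fin n₃ → ℝ)) (W₂ : Fin n₂ → Fin n₂ → (Fin n₃ → ℝ)),
      tenTrans W₁ = W₁ ∧ tenTrans W₂ = W₂ ∧
      tenPSD M (blockTensor W₁ A W₂) ∧
      (1 / 2) * tenInner (tenId M) (blockTensor W₁ A W₂) = γ) := by
  classical
  have hMinv : M⁻¹ = Mᵀ := inv_eq_left_inv hM
  have hM' : M * M⁻¹ = 1 := by rw [hMinv]; exact mul_eq_one_comm.mp hM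
  constructor
  · intro W₁ W₂ hW₁ hW₂ hPSD
    obtain ⟨hsym, hq⟩ := hPSD
    have key : ∀ k : Fin n₃, 2 * (P k).trace ≤
        (Matrix.of fun i j => (M *ᵥ W₁ i j) k).trace +
        (Matrix.of fun i j => (M *ᵥ W₂ i j) k).trace := by
      intro k
      refine (matrix_core (Matrix.of fun i j => (M *ᵥ A i j) k) (P k) (hP k).1 (hP k).2).1 _ _ ?_
      intro x y
      have h := slice_psd M hM hM' _ hq k (Sum.elim x y)
      rw [block_hat, block_quad] at h
      exact h
    have hinner : tenInner (tenId M) (blockTensor W₁ A W₂)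
        = ∑ k, ((Matrix.of fun i j => (M *ᵥ W₁ i j) k).trace +
            (Matrix.of fun i j => (M *ᵥ W₂ i j) k).trace) := by
      rw [inner_id M hM hM']
      refine Finset.sum_congr rfl fun k _ => ?_
      rw [Fintype.sum_sum_type]
      rfl
    have h2 : 2 * ∑ k, (P k).trace ≤ ∑ k, ((Matrix.of fun i j => (M *ᵥ W₁ i j) k).trace +
        (Matrix.of fun i j => (M *ᵥ W₂ i j) k).trace) := by
      rw [Finset.mul_sum]
      exact Finset.sum_le_sum fun k _ => key k
    rw [hγ, hinner]
    linarith
  · choose W₁m W₂m hs1 hs2 hquad htr using fun k : Fin n₃ =>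
      (matrix_core (Matrix.of fun i j => (M *ᵥ A i j) k) (P k) (hP k).1 (hP k).2).2
    have hMM' : M * Mᵀ = 1 := mul_eq_one_comm.mp hM
    set W₁ : Fin n₁ → Fin n₁ → (Fin n₃ → ℝ) := fun i j => Mᵀ *ᵥ (fun k => W₁m k i j) with hW₁def
    set W₂ : Fin n₂ → Fin n₂ → (Fin n₃ → ℝ) := fun i j => Mᵀ *ᵥ (fun k => W₂m k i j) with hW₂def
    have hhat1 : ∀ i j, M *ᵥ W₁ i j = fun k => W₁m k i j := by
      intro i j; rw [hW₁def, mulVec_mulVec, hMM', one_mulVec]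
    have hhat2 : ∀ i j, M *ᵥ W₂ i j = fun k => W₂m k i j := by
      intro i j; rw [hW₂def, mulVec_mulVec, hMM', one_mulVec]
    have hsym1 : tenTrans W₁ = W₁ := by
      funext i j
      show Mᵀ *ᵥ (fun k => W₁m k j i) = Mᵀ *ᵥ (fun k => W₁m k i j)
      have hfn : (fun k => W₁m k j i) = (fun k => W₁m k i j) :=
        funext fun k => congrFun (congrFun (hs1 k) i) j
      rw [hfn]
    have hsym2 : tenTrans W₂ = W₂ := by
      funext i j
      show Mᵀ *ᵥ (fun k => W₂m k j i) = Mᵀ *ᵥ (fun k => W₂m k i j)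
      have hfn : (fun k => W₂m k j i) = (fun k => W₂m k i j) :=
        funext fun k => congrFun (congrFun (hs2 k) i) j
      rw [hfn]
    have hblockhat : ∀ k, (Matrix.of fun p q => (M *ᵥ blockTensor W₁ A W₂ p q) k) =
        Matrix.fromBlocks (W₁m k) (Matrix.of fun i j => (M *ᵥ A i j) k)
          ((Matrix.of fun i j => (M *ᵥ A i j) k)ᵀ) (W₂m k) := by
      intro k
      ext p q
      rcases p with i | i <;> rcases q with j | j
      · show (M *ᵥ W₁ i j) k = W₁m k i j
        rw [hhat1]
      · rfl
      · rfl
      · show (M *ᵥ W₂ i j) k = W₂m k i j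
        rw [hhat2]
    refine ⟨W₁, W₂, hsym1, hsym2, ⟨?_, ?_⟩, ?_⟩
    · funext p q
      rcases p with i | i <;> rcases q with j | j
      · show W₁ j i = W₁ i j
        exact congrFun (congrFun hsym1 i) j
      · rfl
      · rfl
      · show W₂ j i = W₂ i j
        exact congrFun (congrFun hsym2 i) j
    · intro X
      rw [quad_slices M hM hM']
      refine Finset.sum_nonneg fun k _ => ?_
      set z : (Fin n₁ ⊕ Fin n₂) → ℝ := fun p => (M *ᵥ X p 0) k with hz
      have hzelim : z = Sum.elim (fun i => z (Sum.inl i)) (fun j => z (Sum.inr j)) := by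
        funext p; rcases p with i | i <;> rfl
      rw [hblockhat k, hzelim, block_quad]
      exact hquad k _ _
    · have hinner : tenInner (tenId M) (blockTensor W₁ A W₂)
          = ∑ k, ((W₁m k).trace + (W₂m k).trace) := by
        rw [inner_id M hM hM']
        refine Finset.sum_congr rfl fun k _ => ?_
        rw [Fintype.sum_sum_type]
        have e1 : ∀ i, (M *ᵥ blockTensor W₁ A W₂ (Sum.inl i) (Sum.inl i)) k = W₁m k i i := by
          intro i; show (M *ᵥ W₁ i i) k = _; rw [hhat1]
        have e2 : ∀ i, (M *ᵥ blockTensor W₁ A W₂ (Sum.inr i) (Sum.inr i)) k = W₂m k i i := by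
          intro i; show (M *ᵥ W₂ i i) k = _; rw [hhat2]
        rw [Finset.sum_congr rfl fun i _ => e1 i, Finset.sum_congr rfl fun i _ => e2 i]
        rfl
      rw [hinner, hγ]
      have : ∑ k, ((W₁m k).trace + (W₂m k).trace) = ∑ k : Fin n₃, 2 * (P k).trace :=
        Finset.sum_congr rfl fun k _ => htr k
      rw [this, Finset.mul_sum]
      rw [Finset.sum_congr rfl (fun k _ => by ring : ∀ k ∈ Finset.univ, (1:ℝ)/2 * (2 * (P k).trace) = (P k).trace)]

end
end
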